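/- arXiv:1209.6273 — 2 statements merged into one kernel-verified Lean document; each statement's English description precedes it below -/
import Mathlib

section
/- Gamma-nonnegativity of the Eulerian polynomials (Foata–Schützenberger): for every n ≥ 1, there exist nonnegative integers γ_{n,i} for 1 ≤ i ≤ ⌈n/2⌉ such that A_n(t) = Σ_{i=1}^{⌈n/2⌉} γ_{n,i} · t^i · (1+t)^{n+1-2i}. -/
/-- The descent number of a permutation of `Fin n`. -/
def des {n : ℕ} (w : Equiv.Perm (Fin n)) : ℕ :=
  (Finset.univ.filter fun r : Fin n =>
    ∃ s : Fin n, (s : ℕ) = (r : ℕ) + 1 ∧ w s < w r).card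

/-- The `n`-th Eulerian polynomial `A_n(t) = ∑_{w ∈ S_n} t^{des(w)+1}`. -/
noncomputable def eulerianPoly (n : ℕ) : Polynomial ℤ :=
  ∑ w : Equiv.Perm (Fin n), (Polynomial.X : Polynomial ℤ) ^ (des w + 1)

namespace EulerGamma

open Finset Polynomial

variable {n : ℕ}

/-- Insert the maximum value at position `p`. -/
def ins (u : Equiv.Perm (Fin n)) (p : Fin (n + 1)) : Equiv.Perm (Fin (n + 1)) :=
  (finSuccEquiv' p).trans ((Equiv.optionCongr u).trans (finSuccEquiv' (Fin.last n)).symm)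

@[simp] lemma ins_self (u : Equiv.Perm (Fin n)) (p : Fin (n + 1)) :
    ins u p p = Fin.last n := by
  simp [ins]

@[simp] lemma ins_succAbove (u : Equiv.Perm (Fin n)) (p : Fin (n + 1)) (j : Fin n) :
    ins u p (p.succAbove j) = (u j).castSucc := by
  simp [ins, Fin.succAbove_last]

lemma ins_apply_ne (u : Equiv.Perm (Fin n)) (p : Fin (n + 1)) {x : Fin (n + 1)}
    (hx : x ≠ p) : ∃ j : Fin n, p.succAbove j = x ∧ ins u p x = (u j).castSucc := by
  obtain ⟨j, rfl⟩ := Fin.exists_succAbove_eq hx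
  exact ⟨j, rfl, ins_succAbove u p j⟩

lemma ins_bijective :
    Function.Bijective (fun up : Equiv.Perm (Fin n) × Fin (n + 1) => ins up.1 up.2) := by
  rw [Fintype.bijective_iff_injective_and_card]
  constructor
  · rintro ⟨u, p⟩ ⟨u', p'⟩ h
    simp only at h
    have hp : p = p' := by
      by_contra hne
      obtain ⟨j, hj⟩ := Fin.exists_succAbove_eq (show p ≠ p' from hne)
      have h1 : ins u' p' (p'.succAbove j) = Fin.last n := by
        rw [← h, hj]; exact ins_self u p
      rw [ins_succAbove] at h1
      exact absurd h1 (Fin.castSucc_lt_last (u' j)).ne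
    subst hp
    have hu : u = u' := by
      refine Equiv.ext fun j => ?_
      have := congrArg (fun w : Equiv.Perm (Fin (n+1)) => w (p.succAbove j)) h
      simp only [ins_succAbove] at this
      exact Fin.castSucc_injective _ this
    rw [hu]
  · simp [Fintype.card_perm, Nat.factorial_succ, mul_comm]

/-- The descent set of `u`. -/
def Du (u : Equiv.Perm (Fin n)) : Finset (Fin n) :=
  Finset.univ.filter fun r : Fin n =>
    ∃ s : Fin n, (s : ℕ) = (r : ℕ) + 1 ∧ u s < u r

lemma des_eq_card (u : Equiv.Perm (Fin n)) : des u = (Du u).card := rfl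

lemma mem_Du_lt {u : Equiv.Perm (Fin n)} {r : Fin n} (hr : r ∈ Du u) : (r : ℕ) + 1 < n := by
  obtain ⟨-, s, hs, -⟩ := Finset.mem_filter.1 hr
  omega

/-- Positions at which inserting the max does not create a new descent. -/
def B (u : Equiv.Perm (Fin n)) : Finset (Fin (n + 1)) :=
  insert (Fin.last n) ((Du u).image Fin.succ)

lemma card_B (u : Equiv.Perm (Fin n)) : (B u).card = des u + 1 := by
  rw [B, Finset.card_insert_of_notMem, Finset.card_image_of_injective _ (Fin.succ_injective n),
    ← des_eq_card]
  intro h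
  obtain ⟨r, hr, hr2⟩ := Finset.mem_image.1 h
  have := mem_Du_lt hr
  have : (r.succ : ℕ) = n := congrArg Fin.val hr2
  simp at this
  omega

lemma succAbove_val (p : Fin (n + 1)) (j : Fin n) :
    (p.succAbove j : ℕ) = if (j : ℕ) < (p : ℕ) then (j : ℕ) else (j : ℕ) + 1 := by
  rcases lt_or_ge ((j : ℕ)) ((p : ℕ)) with h | h
  · rw [if_pos h, Fin.succAbove_of_castSucc_lt _ _ (by simp [Fin.lt_def]; omega)]
    simp
  · rw [if_neg (by omega), Fin.succAbove_of_le_castSucc _ _ (by simp [Fin.le_def]; omega)]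
    simp

lemma Dw_eq (u : Equiv.Perm (Fin n)) (p : Fin (n + 1)) :
    (Finset.univ.filter fun r : Fin (n + 1) =>
        ∃ s : Fin (n + 1), (s : ℕ) = (r : ℕ) + 1 ∧ ins u p s < ins u p r)
      = (if p = Fin.last n then (∅ : Finset (Fin (n + 1))) else {p}) ∪
        (((Du u).filter fun r => r.val + 1 ≠ p.val).image
          (fun r : Fin n => if r.val + 1 < p.val then (r.castSucc : Fin (n + 1)) else r.succ)) := by
  classical
  ext r
  simp only [Finset.mem_filter, Finset.mem_univ, true_and, Finset.mem_union, Finset.mem_image]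
  constructor
  · rintro ⟨s, hs, hlt⟩
    by_cases hrp : r = p
    · left
      have hplast : p ≠ Fin.last n := by
        intro h
        have : (s : ℕ) ≤ n := Nat.lt_succ_iff.1 s.isLt
        rw [hrp, h] at hs
        simp [Fin.val_last] at hs
        omega
      rw [if_neg hplast, Finset.mem_singleton]
      exact hrp
    · right
      obtain ⟨jr, hjr, hwr⟩ := ins_apply_ne u p hrp
      have hsp : s ≠ p := by
        intro h
        rw [h, ins_self, hwr] at hlt
        exact absurd hlt (Fin.castSucc_lt_last (u jr)).not_gt.elim
      obtain ⟨js, hjs, hws⟩ := ins_apply_ne u p hsp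
      rw [hwr, hws] at hlt
      have hult : u js < u jr := Fin.castSucc_lt_castSucc_iff.1 hlt
      have hrv : (r : ℕ) = if (jr : ℕ) < (p : ℕ) then (jr : ℕ) else (jr : ℕ) + 1 := by
        rw [← hjr, succAbove_val]
      have hsv : (s : ℕ) = if (js : ℕ) < (p : ℕ) then (js : ℕ) else (js : ℕ) + 1 := by
        rw [← hjs, succAbove_val]
      have hrpv : (r : ℕ) ≠ (p : ℕ) := fun h => hrp (Fin.ext h)
      have hspv : (s : ℕ) ≠ (p : ℕ) := fun h => hsp (Fin.ext h)
      have hjsr : (js : ℕ) = (jr : ℕ) + 1 := by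
        split at hrv <;> split at hsv <;> omega
      refine ⟨jr, ⟨Finset.mem_filter.2 ⟨Finset.mem_univ _, ⟨js, hjsr, hult⟩⟩, ?_⟩, ?_⟩
      · split at hrv <;> split at hsv <;> omega
      · apply Fin.ext
        rw [apply_ite Fin.val]
        simp only [Fin.coe_castSucc, Fin.val_succ]
        split at hrv <;> split at hsv <;> (try split) <;> omega
  · rintro (h1 | ⟨j, hj, himg⟩)
    · have hplast : p ≠ Fin.last n := by
        intro h
        rw [h] at h1
        simp at h1
      rw [if_neg hplast] at h1
      have hrp : r = p := Finset.mem_singleton.1 h1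
      have hpn : (p : ℕ) < n := by
        have := p.isLt
        have : (p : ℕ) ≠ n := fun h => hplast (Fin.ext (by simp [Fin.val_last, h]))
        omega
      refine ⟨⟨(p : ℕ) + 1, by omega⟩, by simp [hrp], ?_⟩
      have hsp : (⟨(p : ℕ) + 1, by omega⟩ : Fin (n + 1)) ≠ p := by
        intro h
        have := congrArg Fin.val h
        simp at this
      obtain ⟨j, hjs, hws⟩ := ins_apply_ne u p hsp
      rw [hws, hrp, ins_self]
      exact Fin.castSucc_lt_last (u j)
    · obtain ⟨hjDu, hjne⟩ := hj
      obtain ⟨-, j', hj', hult⟩ := Finset.mem_filter.1 hjDu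
      by_cases hc : (j : ℕ) + 1 < (p : ℕ)
      · rw [if_pos hc] at himg
        have hrsucc : p.succAbove j = r := by
          rw [← himg]
          apply Fin.ext
          rw [succAbove_val, if_pos (by omega)]
          simp
        have hssucc : (p.succAbove j' : ℕ) = (r : ℕ) + 1 := by
          rw [succAbove_val, if_pos (by omega), hj', ← himg]
          simp
        refine ⟨p.succAbove j', hssucc, ?_⟩
        rw [← hrsucc, ins_succAbove, ins_succAbove]
        exact Fin.castSucc_lt_castSucc_iff.2 hult
      · rw [if_neg hc] at himg
        have hrsucc : p.succAbove j = r := by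
          rw [← himg]
          apply Fin.ext
          rw [succAbove_val, if_neg (by omega)]
          simp
        have hssucc : (p.succAbove j' : ℕ) = (r : ℕ) + 1 := by
          rw [succAbove_val, if_neg (by omega), hj', ← himg]
          simp
        refine ⟨p.succAbove j', hssucc, ?_⟩
        rw [← hrsucc, ins_succAbove, ins_succAbove]
        exact Fin.castSucc_lt_castSucc_iff.2 hult

lemma des_ins_eq (u : Equiv.Perm (Fin n)) (p : Fin (n + 1)) :
    des (ins u p) = (if p = Fin.last n then 0 else 1)
      + ((Du u).filter fun r => r.val + 1 ≠ p.val).card := by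
  show (Finset.univ.filter fun r : Fin (n + 1) =>
        ∃ s : Fin (n + 1), (s : ℕ) = (r : ℕ) + 1 ∧ ins u p s < ins u p r).card = _
  rw [Dw_eq u p, Finset.card_union_of_disjoint, Finset.card_image_of_injOn]
  · congr 1
    split <;> simp
  · intro r hr r' hr' hrr
    simp only [Finset.mem_coe, Finset.mem_filter] at hr hr'
    have h1 : (if r.val + 1 < p.val then (r.castSucc : Fin (n + 1)) else r.succ).val
        = (if r.val + 1 < p.val then r.val else r.val + 1) := by split <;> simp
    have h2 : (if r'.val + 1 < p.val then (r'.castSucc : Fin (n + 1)) else r'.succ).val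
        = (if r'.val + 1 < p.val then r'.val else r'.val + 1) := by split <;> simp
    have hval := congrArg Fin.val hrr
    simp only at hval
    rw [h1, h2] at hval
    have e1 := hr.2; have e2 := hr'.2
    apply Fin.ext
    split at hval <;> split at hval <;> omega
  · rw [Finset.disjoint_left]
    intro x hx hx2
    have hxp : x = p := by
      split at hx
      · exact absurd hx (Finset.notMem_empty x)
      · exact Finset.mem_singleton.1 hx
    obtain ⟨r, hr, hr2⟩ := Finset.mem_image.1 hx2
    have hne := (Finset.mem_filter.1 hr).2
    have := congrArg Fin.val hr2
    subst hxp
    split at this <;> simp at this <;> omega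

lemma filter_card_split (u : Equiv.Perm (Fin n)) (p : Fin (n + 1)) :
    ((Du u).filter fun r => r.val + 1 ≠ p.val).card
      + ((Du u).filter fun r => r.val + 1 = p.val).card = des u := by
  rw [des_eq_card, add_comm]
  exact Finset.card_filter_add_card_filter_not _

lemma G_card_mem {u : Equiv.Perm (Fin n)} {p : Fin (n + 1)} (hp : p ∈ B u) (hpl : p ≠ Fin.last n) :
    ((Du u).filter fun r => r.val + 1 = p.val).card = 1 := by
  rw [B, Finset.mem_insert] at hp
  rcases hp with h | h
  · exact absurd h hpl
  obtain ⟨r₀, hr₀, hr₀2⟩ := Finset.mem_image.1 h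
  rw [show ((Du u).filter fun r => r.val + 1 = p.val) = {r₀} from ?_, Finset.card_singleton]
  ext r
  simp only [Finset.mem_filter, Finset.mem_singleton]
  have hv0 : (r₀ : ℕ) + 1 = (p : ℕ) := by simpa using congrArg Fin.val hr₀2
  constructor
  · rintro ⟨hr, hv⟩
    apply Fin.ext
    omega
  · rintro rfl
    exact ⟨hr₀, hv0⟩

lemma G_empty_last (u : Equiv.Perm (Fin n)) :
    ((Du u).filter fun r => r.val + 1 = (Fin.last n).val).card = 0 := by
  rw [Finset.card_eq_zero, Finset.filter_eq_empty_iff]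
  intro r hr
  have := mem_Du_lt hr
  simp only [Fin.val_last]
  omega

lemma G_empty_notMem {u : Equiv.Perm (Fin n)} {p : Fin (n + 1)} (hp : p ∉ B u) :
    ((Du u).filter fun r => r.val + 1 = p.val).card = 0 := by
  rw [Finset.card_eq_zero, Finset.filter_eq_empty_iff]
  intro r hr h
  apply hp
  rw [B, Finset.mem_insert]
  right
  refine Finset.mem_image.2 ⟨r, hr, Fin.ext ?_⟩
  simpa using h

lemma des_u_pos {u : Equiv.Perm (Fin n)} {p : Fin (n + 1)} (hp : p ∈ B u) (hpl : p ≠ Fin.last n) :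
    1 ≤ des u := by
  rw [B, Finset.mem_insert] at hp
  rcases hp with h | h
  · exact absurd h hpl
  obtain ⟨r₀, hr₀, -⟩ := Finset.mem_image.1 h
  rw [des_eq_card]
  exact Finset.card_pos.2 ⟨r₀, hr₀⟩

lemma des_ins_mem {u : Equiv.Perm (Fin n)} {p : Fin (n + 1)} (hp : p ∈ B u) :
    des (ins u p) = des u := by
  have hcard := des_ins_eq u p
  have hs := filter_card_split u p
  by_cases hpl : p = Fin.last n
  · have := G_empty_last u
    rw [← hpl] at this
    rw [hcard, if_pos hpl]
    omega
  · have := G_card_mem hp hpl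
    have := des_u_pos hp hpl
    rw [hcard, if_neg hpl]
    omega

lemma des_ins_notMem {u : Equiv.Perm (Fin n)} {p : Fin (n + 1)} (hp : p ∉ B u) :
    des (ins u p) = des u + 1 := by
  have hcard := des_ins_eq u p
  have hs := filter_card_split u p
  have hpl : p ≠ Fin.last n := fun h => hp (h ▸ Finset.mem_insert_self _ _)
  have := G_empty_notMem hp
  rw [hcard, if_neg hpl]
  omega

lemma sum_ins (u : Equiv.Perm (Fin n)) :
    ∑ p : Fin (n + 1), (Polynomial.X : Polynomial ℤ) ^ (des (ins u p) + 1)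
      = ((des u + 1 : ℕ) : Polynomial ℤ) * Polynomial.X ^ (des u + 1)
        + ((n - des u : ℕ) : Polynomial ℤ) * Polynomial.X ^ (des u + 2) := by
  classical
  have hsub : B u ⊆ Finset.univ := Finset.subset_univ _
  rw [← Finset.sum_sdiff hsub]
  have h1 : ∑ p ∈ B u, (Polynomial.X : Polynomial ℤ) ^ (des (ins u p) + 1)
      = ((des u + 1 : ℕ) : Polynomial ℤ) * Polynomial.X ^ (des u + 1) := by
    rw [Finset.sum_congr rfl (fun p hp => by rw [des_ins_mem hp]), Finset.sum_const, card_B,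
      nsmul_eq_mul]
  have h2 : ∑ p ∈ Finset.univ \ B u, (Polynomial.X : Polynomial ℤ) ^ (des (ins u p) + 1)
      = ((n - des u : ℕ) : Polynomial ℤ) * Polynomial.X ^ (des u + 2) := by
    rw [Finset.sum_congr rfl (fun p hp => by
        rw [des_ins_notMem (Finset.mem_sdiff.1 hp).2]), Finset.sum_const, nsmul_eq_mul,
      Finset.card_sdiff_of_subset hsub, card_B]
    norm_num
    omega
  rw [h1, h2, add_comm]

lemma des_le (u : Equiv.Perm (Fin n)) : des u ≤ n := by
  classical
  calc des u ≤ (Finset.univ : Finset (Fin n)).card := Finset.card_filter_le _ _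
  _ = n := by simp

lemma euler_rec (n : ℕ) :
    eulerianPoly (n + 1)
      = Polynomial.X * (1 - Polynomial.X) * Polynomial.derivative (eulerianPoly n)
        + ((n + 1 : ℕ) : Polynomial ℤ) * Polynomial.X * eulerianPoly n := by
  classical
  have h1 : eulerianPoly (n + 1)
      = ∑ up : Equiv.Perm (Fin n) × Fin (n + 1),
          (Polynomial.X : Polynomial ℤ) ^ (des (ins up.1 up.2) + 1) :=
    (Fintype.sum_bijective _ ins_bijective _ _ (fun _ => rfl)).symm
  rw [h1, Fintype.sum_prod_type]
  rw [Finset.sum_congr rfl (fun u _ => sum_ins u)]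
  rw [eulerianPoly, derivative_sum, Finset.mul_sum, Finset.mul_sum, ← Finset.sum_add_distrib]
  refine Finset.sum_congr rfl (fun u _ => ?_)
  rw [derivative_X_pow]
  simp only [Nat.add_sub_cancel, map_add, map_one, map_natCast]
  have hd : des u ≤ n := des_le u
  push_cast [Nat.cast_sub hd]
  ring

lemma keymain (N j c : ℕ) (hc : c ≠ 0 → 1 ≤ j ∧ 2 * j ≤ N) :
    Polynomial.X * (1 - Polynomial.X) *
        Polynomial.derivative ((c : Polynomial ℤ) * Polynomial.X ^ j * (1 + Polynomial.X) ^ (N - 2 * j))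
      + ((N : ℕ) : Polynomial ℤ) * Polynomial.X *
          ((c : Polynomial ℤ) * Polynomial.X ^ j * (1 + Polynomial.X) ^ (N - 2 * j))
      = ((c * j : ℕ) : Polynomial ℤ) * (Polynomial.X ^ j * (1 + Polynomial.X) ^ (N + 1 - 2 * j))
        + ((c * (2 * (N - 2 * j)) : ℕ) : Polynomial ℤ) *
            (Polynomial.X ^ (j + 1) * (1 + Polynomial.X) ^ (N - 1 - 2 * j)) := by
  rcases eq_or_ne c 0 with rfl | hc0
  · simp
  obtain ⟨hj, hjN⟩ := hc hc0
  obtain ⟨i, rfl⟩ : ∃ i, j = i + 1 := ⟨j - 1, by omega⟩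
  rcases Nat.lt_or_ge (2 * (i + 1)) N with hlt | hge
  · obtain ⟨k, hk⟩ : ∃ k, N = 2 * (i + 1) + (k + 1) := ⟨N - 2 * (i + 1) - 1, by omega⟩
    subst hk
    simp only [show 2 * (i + 1) + (k + 1) - 2 * (i + 1) = k + 1 from by omega,
      show 2 * (i + 1) + (k + 1) + 1 - 2 * (i + 1) = k + 2 from by omega,
      show 2 * (i + 1) + (k + 1) - 1 - 2 * (i + 1) = k from by omega]
    simp [derivative_mul, derivative_pow]
    push_cast
    ring
  · obtain rfl : N = 2 * (i + 1) := by omega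
    simp only [show 2 * (i + 1) - 2 * (i + 1) = 0 from by omega,
      show 2 * (i + 1) + 1 - 2 * (i + 1) = 1 from by omega,
      show 2 * (i + 1) - 1 - 2 * (i + 1) = 0 from by omega]
    simp [derivative_pow]
    push_cast
    ring

theorem aux (n : ℕ) :
    ∃ γ : ℕ → ℕ, γ 0 = 0 ∧ (∀ j, (n + 2) / 2 < j → γ j = 0) ∧
      eulerianPoly (n + 1) =
        ∑ j ∈ Finset.range (n + 3),
          (γ j : Polynomial ℤ) * Polynomial.X ^ j * (1 + Polynomial.X) ^ (n + 2 - 2 * j) := by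
  induction n with
  | zero =>
    refine ⟨fun j => if j = 1 then 1 else 0, by norm_num, ?_, ?_⟩
    · intro j hj
      norm_num at hj ⊢
      omega
    · have hE : eulerianPoly 1 = Polynomial.X := by
        rw [eulerianPoly]
        have hdes : ∀ w : Equiv.Perm (Fin 1), des w = 0 := by
          intro w
          rw [des, Finset.card_eq_zero, Finset.filter_eq_empty_iff]
          rintro r - ⟨s, hs, -⟩
          have := s.isLt
          omega
        simp [hdes]
      rw [hE]
      rw [Finset.sum_range_succ, Finset.sum_range_succ, Finset.sum_range_succ,
        Finset.sum_range_zero]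
      norm_num
  | succ n ih =>
    obtain ⟨γ, h0, hb, hE⟩ := ih
    refine ⟨fun j => γ j * j + γ (j - 1) * (2 * (n + 4 - 2 * j)), by simp [h0], ?_, ?_⟩
    · intro j hj
      have h1 : γ j = 0 := hb j (by omega)
      have h2 : n + 4 - 2 * j = 0 := by omega
      simp [h1, h2]
    · rw [euler_rec (n + 1), hE, derivative_sum, Finset.mul_sum, Finset.mul_sum,
        ← Finset.sum_add_distrib]
      have hterm : ∀ j ∈ Finset.range (n + 3),
          Polynomial.X * (1 - Polynomial.X) *
              Polynomial.derivative ((γ j : Polynomial ℤ) * Polynomial.X ^ j *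
                (1 + Polynomial.X) ^ (n + 2 - 2 * j))
            + ((n + 2 : ℕ) : Polynomial ℤ) * Polynomial.X *
                ((γ j : Polynomial ℤ) * Polynomial.X ^ j * (1 + Polynomial.X) ^ (n + 2 - 2 * j))
          = ((γ j * j : ℕ) : Polynomial ℤ) *
                (Polynomial.X ^ j * (1 + Polynomial.X) ^ (n + 3 - 2 * j))
            + ((γ j * (2 * (n + 2 - 2 * j)) : ℕ) : Polynomial ℤ) *
                (Polynomial.X ^ (j + 1) * (1 + Polynomial.X) ^ (n + 1 - 2 * j)) := by
        intro j hj
        have := keymain (n + 2) j (γ j) (fun hg => ⟨by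
            rcases Nat.eq_zero_or_pos j with h | h
            · exact absurd (h ▸ h0) hg
            · exact h, by
            have := hb j
            by_contra hc
            exact hg (hb j (by omega))⟩)
        simpa only [show n + 2 + 1 - 2 * j = n + 3 - 2 * j from by omega,
          show n + 2 - 1 - 2 * j = n + 1 - 2 * j from by omega] using this
      rw [Finset.sum_congr rfl hterm, Finset.sum_add_distrib]
      have hF : (∑ j ∈ Finset.range (n + 3), ((γ j * j : ℕ) : Polynomial ℤ) *
            (Polynomial.X ^ j * (1 + Polynomial.X) ^ (n + 3 - 2 * j)))
          = ∑ j ∈ Finset.range (n + 4), ((γ j * j : ℕ) : Polynomial ℤ) *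
            (Polynomial.X ^ j * (1 + Polynomial.X) ^ (n + 3 - 2 * j)) := by
        have h4 := Finset.sum_range_succ (fun j => ((γ j * j : ℕ) : Polynomial ℤ) *
            (Polynomial.X ^ j * (1 + Polynomial.X) ^ (n + 3 - 2 * j))) (n + 3)
        rw [show n + 3 + 1 = n + 4 from rfl] at h4
        rw [h4]
        simp [hb (n + 3) (by omega)]
      have hG : (∑ j ∈ Finset.range (n + 3), ((γ j * (2 * (n + 2 - 2 * j)) : ℕ) : Polynomial ℤ) *
            (Polynomial.X ^ (j + 1) * (1 + Polynomial.X) ^ (n + 1 - 2 * j)))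
          = ∑ j ∈ Finset.range (n + 4), ((γ (j - 1) * (2 * (n + 4 - 2 * j)) : ℕ) : Polynomial ℤ) *
            (Polynomial.X ^ j * (1 + Polynomial.X) ^ (n + 3 - 2 * j)) := by
        have h4 := Finset.sum_range_succ' (fun j => ((γ (j - 1) * (2 * (n + 4 - 2 * j)) : ℕ) : Polynomial ℤ) *
            (Polynomial.X ^ j * (1 + Polynomial.X) ^ (n + 3 - 2 * j))) (n + 3)
        rw [show n + 3 + 1 = n + 4 from rfl] at h4
        rw [h4]
        simp only [h0, Nat.zero_sub, Nat.mul_zero, Nat.zero_mul, Nat.cast_zero, zero_mul, add_zero,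
          Nat.add_sub_cancel]
        refine Finset.sum_congr rfl fun i _ => ?_
        simp only [show n + 4 - 2 * (i + 1) = n + 2 - 2 * i from by omega,
          show n + 3 - 2 * (i + 1) = n + 1 - 2 * i from by omega]
      rw [hF, hG, ← Finset.sum_add_distrib]
      show _ = ∑ j ∈ Finset.range (n + 4),
          ((γ j * j + γ (j - 1) * (2 * (n + 4 - 2 * j)) : ℕ) : Polynomial ℤ) *
            Polynomial.X ^ j * (1 + Polynomial.X) ^ (n + 3 - 2 * j)
      refine Finset.sum_congr rfl fun j _ => ?_
      push_cast
      ring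

end EulerGamma

/-- Gamma-nonnegativity (Foata–Schützenberger): there exist nonnegative
integers `γ_{n,i}`, `1 ≤ i ≤ ⌈n/2⌉`, with
`A_n(t) = ∑_i γ_{n,i} t^i (1+t)^{n+1-2i}`.  (Here `⌈n/2⌉ = (n+1)/2` in
natural number arithmetic.) -/
theorem eulerianPoly_gamma_nonneg (n : ℕ) (hn : 1 ≤ n) :
    ∃ γ : ℕ → ℕ,
      eulerianPoly n =
        ∑ i ∈ Finset.Icc 1 ((n + 1) / 2),
          (γ i : Polynomial ℤ) * Polynomial.X ^ i *
            (1 + Polynomial.X) ^ (n + 1 - 2 * i) := by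
  obtain ⟨m, rfl⟩ : ∃ m, n = m + 1 := ⟨n - 1, by omega⟩
  obtain ⟨γ, h0, hb, hE⟩ := EulerGamma.aux m
  refine ⟨γ, hE.trans ?_⟩
  rw [show m + 1 + 1 = m + 3 - 1 from rfl]
  refine (Finset.sum_subset ?_ ?_).symm
  · intro j hj
    simp only [Finset.mem_Icc, Finset.mem_range] at *
    omega
  · intro j hj hj'
    simp only [Finset.mem_Icc, Finset.mem_range] at *
    have : γ j = 0 := by
      rcases Nat.eq_zero_or_pos j with h | h
      · simpa [h] using h0
      · exact hb j (by omega)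
    simp [this]
end

section
/- For every n ≥ 2 and all i, j with 1 ≤ i, j ≤ n, the two-sided Eulerian numbers satisfy the four-term recurrence: n·A_{n,i,j} = (ij+n-1)·A_{n-1,i,j} + (1-n+j(n+1-i))·A_{n-1,i-1,j} + (1-n+i(n+1-j))·A_{n-1,i,j-1} + (n-1+(n+1-i)(n+1-j))·A_{n-1,i-1,j-1}, where A_{n-1,a,b} is interpreted as 0 when a or b lies outside {1,...,n-1}. -/
/-- The two-sided Eulerian number `A_{n,i,j}`: the number of permutations `w`
of `Fin n` with `des w⁻¹ = i - 1` and `des w = j - 1`, interpreted as `0`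
when `i` or `j` lies outside `{1, …, n}`. -/
def twoSidedEulerianNum (n i j : ℕ) : ℕ :=
  if 1 ≤ i ∧ i ≤ n ∧ 1 ≤ j ∧ j ≤ n then
    (Finset.univ.filter fun w : Equiv.Perm (Fin n) =>
      des w⁻¹ = i - 1 ∧ des w = j - 1).card
  else 0

open Finset

namespace TSE

variable {n : ℕ} {α : Type*}

lemma perm_apply_inv_self {β : Type*} (f : Equiv.Perm β) (x : β) : f (f⁻¹ x) = x :=
  f.apply_symm_apply x

lemma chain_adj {r : α → α → Prop} (ht : Transitive r) {f : Fin n → α}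
    (h : ∀ a b : Fin n, (b : ℕ) = (a : ℕ) + 1 → r (f a) (f b)) :
    ∀ (d : ℕ) (a b : Fin n), (b : ℕ) = (a : ℕ) + 1 + d → r (f a) (f b) := by
  intro d
  induction d with
  | zero => intro a b hb; exact h a b (by omega)
  | succ d ih =>
      intro a b hb
      have hb' : (a : ℕ) + 1 + d < n := by have := b.isLt; omega
      exact ht (ih a ⟨_, hb'⟩ rfl) (h ⟨_, hb'⟩ b (by simp; omega))

lemma monotone_of_adj [Preorder α] {f : Fin n → α}
    (h : ∀ a b : Fin n, (b : ℕ) = (a : ℕ) + 1 → f a ≤ f b) : Monotone f := by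
  intro a b hab
  rcases eq_or_lt_of_le hab with rfl | hlt
  · exact le_rfl
  · exact chain_adj (r := (· ≤ ·)) (fun _ _ _ h h' => le_trans h h') h ((b : ℕ) - (a : ℕ) - 1) a b
      (by have := (Fin.lt_def).1 hlt; omega)

lemma strictMono_of_adj [Preorder α] {f : Fin n → α}
    (h : ∀ a b : Fin n, (b : ℕ) = (a : ℕ) + 1 → f a < f b) : StrictMono f := by
  intro a b hlt
  exact chain_adj (r := (· < ·)) (fun _ _ _ h h' => lt_trans h h') h ((b : ℕ) - (a : ℕ) - 1) a b
    (by have := (Fin.lt_def).1 hlt; omega)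

lemma strictMono_steps {N : ℕ} {G : Fin n → Fin N} (hG : StrictMono G) :
    ∀ a b : Fin n, (a : ℕ) ≤ (b : ℕ) → (G a : ℕ) + ((b : ℕ) - (a : ℕ)) ≤ (G b : ℕ) := by
  suffices h : ∀ (d : ℕ) (a b : Fin n), (b : ℕ) = (a : ℕ) + d → (G a : ℕ) + d ≤ (G b : ℕ) by
    intro a b hab; have := h ((b : ℕ) - (a : ℕ)) a b (by omega); omega
  intro d
  induction d with
  | zero => intro a b hb; have : a = b := Fin.ext (by omega); subst this; omega
  | succ d ih =>
      intro a b hb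
      have hb' : (a : ℕ) + d < n := by have := b.isLt; omega
      have h1 := ih a ⟨_, hb'⟩ rfl
      have h2 : G ⟨_, hb'⟩ < G b := hG (by rw [Fin.lt_def]; simp; omega)
      have h3 := (Fin.lt_def).1 h2
      omega

lemma card_strictMono (n N : ℕ) :
    Nat.card {G : Fin n → Fin N // StrictMono G} = N.choose n := by
  have E : {G : Fin n → Fin N // StrictMono G} ≃ {s : Finset (Fin N) // s.card = n} :=
    { toFun := fun G => ⟨Finset.univ.image G.1, by
        rw [Finset.card_image_of_injective _ G.2.injective, Finset.card_univ, Fintype.card_fin]⟩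
      invFun := fun s => ⟨⇑(s.1.orderEmbOfFin s.2), (s.1.orderEmbOfFin s.2).strictMono⟩
      left_inv := fun G => by
        apply Subtype.ext
        exact (Finset.orderEmbOfFin_unique _
          (fun x => Finset.mem_image_of_mem _ (Finset.mem_univ x)) G.2).symm
      right_inv := fun s => by
        apply Subtype.ext
        apply Finset.eq_of_subset_of_card_le
        · intro x hx
          obtain ⟨k, _, rfl⟩ := Finset.mem_image.1 hx
          exact Finset.orderEmbOfFin_mem s.1 s.2 k
        · rw [Finset.card_image_of_injective _ (s.1.orderEmbOfFin s.2).injective,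
            Finset.card_univ, Fintype.card_fin, s.2] }
  rw [Nat.card_congr E, Nat.card_eq_fintype_card, Fintype.card_finset_len, Fintype.card_fin]

/-- number of elements of `S` with value `< k` -/
def cS (S : Finset (Fin n)) (k : ℕ) : ℕ := (S.filter fun s : Fin n => (s : ℕ) < k).card

lemma cS_le (S : Finset (Fin n)) (k : ℕ) : cS S k ≤ k := by
  have : (S.filter fun s : Fin n => (s : ℕ) < k).card ≤ (Finset.range k).card := by
    apply Finset.card_le_card_of_injOn (fun s : Fin n => (s : ℕ))
    · intro s hs; simpa using (Finset.mem_filter.1 hs).2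
    · exact fun a _ b _ h => Fin.ext h
  simpa [cS] using this

lemma cS_zero (S : Finset (Fin n)) : cS S 0 = 0 := by simp [cS]

lemma cS_le_card (S : Finset (Fin n)) (k : ℕ) : cS S k ≤ S.card :=
  Finset.card_le_card (Finset.filter_subset _ _)

lemma cS_succ (S : Finset (Fin n)) (r : Fin n) :
    cS S ((r : ℕ) + 1) = cS S (r : ℕ) + (if r ∈ S then 1 else 0) := by
  classical
  have hsplit : (S.filter fun s : Fin n => (s : ℕ) < (r : ℕ) + 1)
      = (S.filter fun s : Fin n => (s : ℕ) < (r : ℕ)) ∪ (S.filter fun s : Fin n => s = r) := by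
    ext s
    simp only [Finset.mem_filter, Finset.mem_union]
    constructor
    · rintro ⟨hs, hlt⟩
      rcases Nat.lt_or_ge (s : ℕ) (r : ℕ) with h | h
      · exact Or.inl ⟨hs, h⟩
      · exact Or.inr ⟨hs, Fin.ext (by omega)⟩
    · rintro (⟨hs, h⟩ | ⟨hs, rfl⟩)
      · exact ⟨hs, by omega⟩
      · exact ⟨hs, by omega⟩
  have hdisj : Disjoint (S.filter fun s : Fin n => (s : ℕ) < (r : ℕ)) (S.filter fun s : Fin n => s = r) := by
    rw [Finset.disjoint_left]
    rintro s hs1 hs2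
    have h1 := (Finset.mem_filter.1 hs1).2
    have h2 := (Finset.mem_filter.1 hs2).2
    subst h2; omega
  rw [cS, hsplit, Finset.card_union_of_disjoint hdisj, Finset.filter_eq']
  split <;> simp [cS]

lemma cS_bound {S : Finset (Fin n)} (hS : ∀ r ∈ S, (r : ℕ) + 1 < n) (k : ℕ) (hk : k ≤ n - 1) :
    S.card + k ≤ cS S k + (n - 1) := by
  classical
  have h1 : (S.filter fun s : Fin n => ¬ (s : ℕ) < k).card ≤ (n - 1) - k := by
    have : (S.filter fun s : Fin n => ¬ (s : ℕ) < k).card ≤ (Finset.Ico k (n-1)).card := by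
      apply Finset.card_le_card_of_injOn (fun s : Fin n => (s : ℕ))
      · intro s hs
        have h2 := (Finset.mem_filter.1 hs).2
        have h3 := hS s (Finset.mem_filter.1 hs).1
        simp only [Finset.mem_coe, Finset.mem_Ico]; omega
      · exact fun a _ b _ h => Fin.ext h
    simpa using this
  have h2 := Finset.card_filter_add_card_filter_not
    (s := S) (p := fun s : Fin n => (s : ℕ) < k)
  have h3 : cS S k = (S.filter fun s : Fin n => (s : ℕ) < k).card := rfl
  omega


theorem count_strict [LinearOrder α] [Fintype α] (S : Finset (Fin n))
    (hS : ∀ r ∈ S, (r : ℕ) + 1 < n) :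
    Nat.card {g : Fin n → α // Monotone g ∧
        ∀ r s : Fin n, (s : ℕ) = (r : ℕ) + 1 → r ∈ S → g r < g s}
      = (Fintype.card α + n - 1 - S.card).choose n := by
  classical
  rcases Nat.eq_zero_or_pos n with rfl | hn
  · have hSe : S = ∅ := Finset.eq_empty_of_isEmpty S
    haveI : Unique {g : Fin 0 → α // Monotone g ∧
        ∀ r s : Fin 0, (s : ℕ) = (r : ℕ) + 1 → r ∈ S → g r < g s} :=
      { default := ⟨fun r => r.elim0, fun a => a.elim0, fun r => r.elim0⟩
        uniq := fun g => Subtype.ext (funext fun r => r.elim0) }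
    rw [Nat.card_unique, hSe]
    simp
  · have hScard : S.card ≤ n - 1 := by
      have := cS_bound hS 0 (by omega)
      rw [cS_zero] at this; omega
    let e : Fin (Fintype.card α) ≃o α := monoEquivOfFin α rfl
    have E : {g : Fin n → α // Monotone g ∧
        ∀ r s : Fin n, (s : ℕ) = (r : ℕ) + 1 → r ∈ S → g r < g s}
        ≃ {G : Fin n → Fin (Fintype.card α + n - 1 - S.card) // StrictMono G} :=
      { toFun := fun gh => ⟨fun k => ⟨(e.symm (gh.1 k) : ℕ) + ((k : ℕ) - cS S (k : ℕ)), by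
          have h1 : (e.symm (gh.1 k) : ℕ) < Fintype.card α := (e.symm (gh.1 k)).isLt
          have h2 := cS_bound hS (k : ℕ) (by have := k.isLt; omega)
          have h3 := cS_le S (k : ℕ)
          have h4 := k.isLt
          omega⟩, by
          apply strictMono_of_adj
          intro a b hb
          rw [Fin.lt_def]
          simp only
          have hc : cS S (b : ℕ) = cS S (a : ℕ) + (if a ∈ S then 1 else 0) := by
            rw [hb]; exact cS_succ S a
          have hca := cS_le S (a : ℕ)
          by_cases hmem : a ∈ S
          · have hlt : gh.1 a < gh.1 b := gh.2.2 a b hb hmem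
            have : e.symm (gh.1 a) < e.symm (gh.1 b) := by
              rw [OrderIso.lt_iff_lt]; exact hlt
            have := (Fin.lt_def).1 this
            simp [hmem] at hc
            omega
          · have hle : gh.1 a ≤ gh.1 b := gh.2.1 (by rw [Fin.le_def]; omega)
            have : e.symm (gh.1 a) ≤ e.symm (gh.1 b) := by
              rw [OrderIso.le_iff_le]; exact hle
            have := (Fin.le_def).1 this
            simp [hmem] at hc
            omega⟩
        invFun := fun Gh => ⟨fun k => e ⟨(Gh.1 k : ℕ) - ((k : ℕ) - cS S (k : ℕ)), by
          have hlast : ((⟨n-1, by omega⟩ : Fin n) : ℕ) = n - 1 := rfl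
          have h5 := strictMono_steps Gh.2 k ⟨n-1, by omega⟩ (by rw [hlast]; have := k.isLt; omega)
          have h4 : (Gh.1 ⟨n-1, by omega⟩ : ℕ) < Fintype.card α + n - 1 - S.card := (Gh.1 _).isLt
          have h6 := cS_bound hS (k : ℕ) (by have := k.isLt; omega)
          have h7 := cS_le S (k : ℕ)
          have h9 := cS_le_card S (k : ℕ)
          have h8 := k.isLt
          have h10 := strictMono_steps Gh.2 ⟨0, by omega⟩ ⟨n-1, by omega⟩ (by simp)
          simp only [hlast, Fin.val_mk] at h5 h4 h10
          omega⟩, by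
          constructor
          · apply monotone_of_adj
            intro a b hb
            have hfirst : ((⟨0, hn⟩ : Fin n) : ℕ) = 0 := rfl
            have hga := strictMono_steps Gh.2 ⟨0, hn⟩ a (by omega)
            have hlt : (Gh.1 a : ℕ) < (Gh.1 b : ℕ) :=
              (Fin.lt_def).1 (Gh.2 (by rw [Fin.lt_def]; omega))
            have hc : cS S (b : ℕ) = cS S (a : ℕ) + (if a ∈ S then 1 else 0) := by
              rw [hb]; exact cS_succ S a
            have hca := cS_le S (a : ℕ)
            simp only [hfirst] at hga
            rw [OrderIso.le_iff_le, Fin.mk_le_mk]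
            split at hc <;> omega
          · intro r s hs hmem
            have hfirst : ((⟨0, hn⟩ : Fin n) : ℕ) = 0 := rfl
            have hgr := strictMono_steps Gh.2 ⟨0, hn⟩ r (by omega)
            simp only [hfirst] at hgr
            have hlt : (Gh.1 r : ℕ) < (Gh.1 s : ℕ) :=
              (Fin.lt_def).1 (Gh.2 (by rw [Fin.lt_def]; omega))
            have hc : cS S (s : ℕ) = cS S (r : ℕ) + (if r ∈ S then 1 else 0) := by
              rw [hs]; exact cS_succ S r
            rw [if_pos hmem] at hc
            have hca := cS_le S (r : ℕ)
            rw [OrderIso.lt_iff_lt, Fin.mk_lt_mk]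
            omega⟩
        left_inv := fun gh => by
          apply Subtype.ext
          funext k
          simp only
          have : (⟨(e.symm (gh.1 k) : ℕ) + ((k : ℕ) - cS S (k : ℕ)) - ((k : ℕ) - cS S (k : ℕ)),
              by omega⟩ : Fin (Fintype.card α)) = e.symm (gh.1 k) := Fin.ext (by simp)
          rw [this, OrderIso.apply_symm_apply]
        right_inv := fun Gh => by
          apply Subtype.ext
          funext k
          apply Fin.ext
          simp only
          rw [OrderIso.symm_apply_apply]
          simp only
          have hfirst : ((⟨0, hn⟩ : Fin n) : ℕ) = 0 := rfl
          have hgk := strictMono_steps Gh.2 ⟨0, hn⟩ k (by omega)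
          simp only [hfirst] at hgk
          have := cS_le S (k : ℕ)
          omega }
    rw [Nat.card_congr E, card_strictMono]


section Des

def desSet {n : ℕ} (w : Equiv.Perm (Fin n)) : Finset (Fin n) :=
  Finset.univ.filter fun r : Fin n =>
    ∃ s : Fin n, (s : ℕ) = (r : ℕ) + 1 ∧ w s < w r

lemma des_eq {n : ℕ} (w : Equiv.Perm (Fin n)) : des w = (desSet w).card := rfl

lemma mem_desSet {n : ℕ} {w : Equiv.Perm (Fin n)} {r s : Fin n} (hs : (s : ℕ) = (r : ℕ) + 1) :
    r ∈ desSet w ↔ w s < w r := by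
  simp only [desSet, Finset.mem_filter, Finset.mem_univ, true_and]
  constructor
  · rintro ⟨s', hs', hlt⟩
    rwa [show s' = s from Fin.ext (by omega)] at hlt
  · exact fun h => ⟨s, hs, h⟩

lemma desSet_bound {n : ℕ} (w : Equiv.Perm (Fin n)) : ∀ r ∈ desSet w, (r : ℕ) + 1 < n := by
  intro r hr
  simp only [desSet, Finset.mem_filter, Finset.mem_univ, true_and] at hr
  obtain ⟨s, hs, -⟩ := hr
  have := s.isLt
  omega

lemma card_le_of_bound {n : ℕ} {S : Finset (Fin n)} (hS : ∀ r ∈ S, (r : ℕ) + 1 < n) :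
    S.card ≤ n - 1 := by
  have := cS_bound hS 0 (by omega)
  rw [cS_zero] at this; omega

lemma des_le {n : ℕ} (w : Equiv.Perm (Fin n)) : des w ≤ n - 1 :=
  des_eq w ▸ card_le_of_bound (desSet_bound w)

end Des

section Main

variable {n x y : ℕ}

/-- the `x`-side compatible functions for `w` -/
def FtP (n x : ℕ) (w : Equiv.Perm (Fin n)) : Type :=
  {f : Fin n → Fin x // Monotone f ∧
    ∀ r s : Fin n, (s : ℕ) = (r : ℕ) + 1 → r ∈ desSet w → f r < f s}

/-- the `y`-side compatible functions for `w` -/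
def GtP (n y : ℕ) (w : Equiv.Perm (Fin n)) : Type :=
  {g : Fin n → Fin y // Monotone g ∧
    ∀ r s : Fin n, (s : ℕ) = (r : ℕ) + 1 → r ∈ desSet w⁻¹ → g r < g s}

lemma card_FtP (w : Equiv.Perm (Fin n)) :
    Nat.card (FtP n x w) = (x + n - 1 - des w).choose n := by
  have := count_strict (α := Fin x) (desSet w) (desSet_bound w)
  rwa [Fintype.card_fin, ← des_eq] at this

lemma card_GtP (w : Equiv.Perm (Fin n)) :
    Nat.card (GtP n y w) = (y + n - 1 - des w⁻¹).choose n := by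
  have := count_strict (α := Fin y) (desSet w⁻¹) (desSet_bound w⁻¹)
  rwa [Fintype.card_fin, ← des_eq] at this

lemma lex_le_iff (u v : Fin x ×ₗ Fin y) :
    u ≤ v ↔ (ofLex u).1 < (ofLex v).1 ∨ ((ofLex u).1 = (ofLex v).1 ∧ (ofLex u).2 ≤ (ofLex v).2) :=
  Prod.Lex.le_iff

lemma lex_lt_iff {β γ : Type*} [PartialOrder β] [Preorder γ] (u v : β ×ₗ γ) :
    u < v ↔ (ofLex u).1 < (ofLex v).1 ∨ ((ofLex u).1 = (ofLex v).1 ∧ (ofLex u).2 < (ofLex v).2) :=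
  Prod.Lex.lt_iff

def bbOf (b : Fin n → Fin y) : Fin n → (Fin y ×ₗ Fin n) := fun k => toLex (b k, k)

lemma bbOf_inj (b : Fin n → Fin y) : Function.Injective (bbOf b) := fun k l h => by
  have := congrArg (fun p => (ofLex p).2) h
  simpa [bbOf] using this

lemma bb_sort_strictMono (b : Fin n → Fin y) :
    StrictMono (bbOf b ∘ Tuple.sort (bbOf b)) :=
  (Tuple.monotone_sort (bbOf b)).strictMono_of_injective
    ((bbOf_inj b).comp (Tuple.sort (bbOf b)).injective)

lemma sort_unique {b : Fin n → Fin y} {τ : Equiv.Perm (Fin n)}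
    (h : Monotone (bbOf b ∘ τ)) : Tuple.sort (bbOf b) = τ := by
  have h2 := Tuple.unique_monotone (Tuple.monotone_sort (bbOf b)) h
  exact Equiv.ext fun k => bbOf_inj b (congrFun h2 k)

def aOf (p : Fin n → (Fin x ×ₗ Fin y)) : Fin n → Fin x := fun k => (ofLex (p k)).1
def bOf (p : Fin n → (Fin x ×ₗ Fin y)) : Fin n → Fin y := fun k => (ofLex (p k)).2

def fwd (p : {p : Fin n → (Fin x ×ₗ Fin y) // Monotone p}) :
    Σ w : Equiv.Perm (Fin n), FtP n x w × GtP n y w := by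
  refine ⟨(Tuple.sort (bbOf (bOf p.1)))⁻¹,
    ⟨aOf p.1, ?_, ?_⟩, ⟨bOf p.1 ∘ Tuple.sort (bbOf (bOf p.1)), ?_, ?_⟩⟩
  · intro u v huv
    rcases (lex_le_iff _ _).1 (p.2 huv) with h | h
    · exact le_of_lt h
    · exact le_of_eq h.1
  · intro r s hs hmem
    set σ := Tuple.sort (bbOf (bOf p.1)) with hσ
    have hlt : σ⁻¹ s < σ⁻¹ r := (mem_desSet hs).1 hmem
    have h2 := bb_sort_strictMono (bOf p.1) hlt
    simp only [Function.comp_apply, ← hσ, perm_apply_inv_self] at h2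
    rcases (lex_lt_iff _ _).1 h2 with h | h
    · rcases (lex_le_iff _ _).1 (p.2 (show r ≤ s by rw [Fin.le_def]; omega)) with h' | h'
      · exact h'
      · exact absurd h'.2 (not_le_of_gt h)
    · exfalso
      have h3 : s < r := h.2
      rw [Fin.lt_def] at h3
      omega
  · intro u v huv
    rcases eq_or_lt_of_le huv with rfl | hlt
    · exact le_rfl
    · have h2 := bb_sort_strictMono (bOf p.1) hlt
      rcases (lex_lt_iff _ _).1 h2 with h | h
      · exact le_of_lt h
      · exact le_of_eq h.1
  · intro r s hs hmem
    set σ := Tuple.sort (bbOf (bOf p.1)) with hσ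
    rw [inv_inv] at hmem
    have hlt : σ s < σ r := (mem_desSet hs).1 hmem
    have h2 := bb_sort_strictMono (bOf p.1) (show r < s by rw [Fin.lt_def]; omega)
    rcases (lex_lt_iff _ _).1 h2 with h | h
    · exact h
    · exfalso
      exact absurd hlt (not_lt_of_gt h.2)

def bwd (t : Σ w : Equiv.Perm (Fin n), FtP n x w × GtP n y w) :
    {p : Fin n → (Fin x ×ₗ Fin y) // Monotone p} := by
  refine ⟨fun k => toLex (t.2.1.1 k, t.2.2.1 (t.1 k)), ?_⟩
  apply monotone_of_adj
  intro r s hs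
  rw [lex_le_iff]
  rcases lt_or_eq_of_le (t.2.1.2.1 (show r ≤ s by rw [Fin.le_def]; omega)) with h | h
  · exact Or.inl h
  · refine Or.inr ⟨h, ?_⟩
    have hw : t.1 r < t.1 s := by
      rcases lt_trichotomy (t.1 r) (t.1 s) with h' | h' | h'
      · exact h'
      · exact absurd (t.1.injective h') (by intro hrs; rw [hrs] at hs; omega)
      · exact absurd (t.2.1.2.2 r s hs ((mem_desSet hs).2 h')) (by rw [← h]; exact lt_irrefl _)
    exact t.2.2.2.1 (le_of_lt hw)

lemma sigma_mk_eq {n x y : ℕ} {w w' : Equiv.Perm (Fin n)} (h : w = w')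
    {F : FtP n x w} {F' : FtP n x w'} {G : GtP n y w} {G' : GtP n y w'}
    (hF : F.1 = F'.1) (hG : G.1 = G'.1) :
    (⟨w, (F, G)⟩ : Σ u : Equiv.Perm (Fin n), FtP n x u × GtP n y u) = ⟨w', (F', G')⟩ := by
  subst h
  rw [show F = F' from Subtype.ext hF, show G = G' from Subtype.ext hG]

def mainEquiv (n x y : ℕ) :
    {p : Fin n → (Fin x ×ₗ Fin y) // Monotone p}
      ≃ Σ w : Equiv.Perm (Fin n), FtP n x w × GtP n y w where
  toFun := fwd
  invFun := bwd
  left_inv := fun p => by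
    apply Subtype.ext
    funext k
    show toLex (aOf p.1 k,
      (bOf p.1 ∘ Tuple.sort (bbOf (bOf p.1))) ((Tuple.sort (bbOf (bOf p.1)))⁻¹ k)) = p.1 k
    rw [Function.comp_apply, perm_apply_inv_self]
    rfl
  right_inv := fun t => by
    obtain ⟨w, F, G⟩ := t
    have key : Tuple.sort (bbOf (bOf (bwd ⟨w, (F, G)⟩).1)) = w⁻¹ := by
      apply sort_unique
      apply monotone_of_adj
      intro r s hs
      rw [lex_le_iff]
      show G.1 (w (w⁻¹ r)) < G.1 (w (w⁻¹ s)) ∨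
        (G.1 (w (w⁻¹ r)) = G.1 (w (w⁻¹ s)) ∧ w⁻¹ r ≤ w⁻¹ s)
      rw [perm_apply_inv_self, perm_apply_inv_self]
      rcases lt_or_eq_of_le (G.2.1 (show r ≤ s by rw [Fin.le_def]; omega)) with h | h
      · exact Or.inl h
      · refine Or.inr ⟨h, ?_⟩
        by_contra hcon
        push_neg at hcon
        exact absurd (G.2.2 r s hs ((mem_desSet hs).2 hcon))
          (by rw [h]; exact lt_irrefl _)
    refine sigma_mk_eq ?_ ?_ ?_
    · rw [key]; exact inv_inv w
    · rfl
    · funext m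
      show bOf (bwd ⟨w, (F, G)⟩).1 (Tuple.sort (bbOf (bOf (bwd ⟨w, (F, G)⟩).1)) m) = G.1 m
      rw [key]
      show G.1 (w (w⁻¹ m)) = G.1 m
      rw [perm_apply_inv_self]

lemma card_sum (n x y : ℕ) :
    Nat.card {p : Fin n → (Fin x ×ₗ Fin y) // Monotone p}
      = ∑ w : Equiv.Perm (Fin n),
          (x + n - 1 - des w).choose n * (y + n - 1 - des w⁻¹).choose n := by
  classical
  haveI : ∀ w : Equiv.Perm (Fin n), Fintype (FtP n x w) := fun w => @Fintype.ofFinite _ (by unfold FtP; infer_instance)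
  haveI : ∀ w : Equiv.Perm (Fin n), Fintype (GtP n y w) := fun w => @Fintype.ofFinite _ (by unfold GtP; infer_instance)
  rw [Nat.card_congr (mainEquiv n x y), Nat.card_eq_fintype_card, Fintype.card_sigma]
  refine Finset.sum_congr rfl fun w _ => ?_
  rw [Fintype.card_prod, ← Nat.card_eq_fintype_card, ← Nat.card_eq_fintype_card,
    card_FtP, card_GtP]

lemma card_lex (n x y : ℕ) :
    Nat.card {p : Fin n → (Fin x ×ₗ Fin y) // Monotone p} = (x * y + n - 1).choose n := by
  have h := count_strict (α := Fin x ×ₗ Fin y) (∅ : Finset (Fin n)) (by simp)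
  have e : {p : Fin n → (Fin x ×ₗ Fin y) // Monotone p} ≃
      {g : Fin n → (Fin x ×ₗ Fin y) // Monotone g ∧
        ∀ r s : Fin n, (s : ℕ) = (r : ℕ) + 1 → r ∈ (∅ : Finset (Fin n)) → g r < g s} :=
    Equiv.subtypeEquivRight (fun g => by simp)
  rw [Nat.card_congr e, h, Finset.card_empty, Nat.sub_zero]
  congr 2
  rw [Fintype.card_lex, Fintype.card_prod, Fintype.card_fin, Fintype.card_fin]

theorem CRS (n x y : ℕ) (hn : 1 ≤ n) :
    ∑ i ∈ Finset.range (n+1), ∑ j ∈ Finset.range (n+1),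
      twoSidedEulerianNum n i j * ((x + n - i).choose n * (y + n - j).choose n)
    = (x * y + n - 1).choose n := by
  classical
  rw [← card_lex n x y, card_sum n x y]
  have hswap : ∑ w : Equiv.Perm (Fin n),
      (x + n - 1 - des w).choose n * (y + n - 1 - des w⁻¹).choose n
      = ∑ w : Equiv.Perm (Fin n),
      (x + n - 1 - des w⁻¹).choose n * (y + n - 1 - des w).choose n :=
    Fintype.sum_bijective (fun w => w⁻¹) (by
        exact (Equiv.inv (Equiv.Perm (Fin n))).bijective) _ _ (fun w => by
      show _ = (x + n - 1 - des w⁻¹⁻¹).choose n * (y + n - 1 - des w⁻¹).choose n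
      rw [inv_inv])
  rw [hswap]
  have hA : ∀ i j : ℕ, 1 ≤ i → 1 ≤ j → i ≤ n → j ≤ n → twoSidedEulerianNum n i j
      = (Finset.univ.filter fun w : Equiv.Perm (Fin n) =>
          (des w⁻¹ + 1, des w + 1) = (i, j)).card := by
    intro i j hi hj hin hjn
    rw [twoSidedEulerianNum, if_pos ⟨hi, hin, hj, hjn⟩]
    congr 1
    apply Finset.filter_congr
    intro w _
    simp only [Prod.mk.injEq]
    omega
  have hmaps : ∀ w : Equiv.Perm (Fin n), w ∈ Finset.univ →
      (des w⁻¹ + 1, des w + 1) ∈ Finset.range (n+1) ×ˢ Finset.range (n+1) := by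
    intro w _
    have h1 := des_le w
    have h2 := des_le w⁻¹
    simp only [Finset.mem_product, Finset.mem_range]
    omega
  rw [← Finset.sum_fiberwise_of_maps_to hmaps
    (fun w => (x + n - 1 - des w⁻¹).choose n * (y + n - 1 - des w).choose n)]
  rw [Finset.sum_product]
  refine Finset.sum_congr rfl fun i hi => Finset.sum_congr rfl fun j hj => ?_
  rw [Finset.mem_range] at hi hj
  by_cases hij : 1 ≤ i ∧ 1 ≤ j
  · rw [hA i j hij.1 hij.2 (by omega) (by omega)]
    rw [Finset.card_eq_sum_ones, Finset.sum_mul, one_mul]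
    refine Finset.sum_congr rfl fun w hw => ?_
    simp only [Finset.mem_filter, Prod.mk.injEq] at hw
    have h1 := des_le w
    have h2 := des_le w⁻¹
    have e1 : x + n - i = x + n - 1 - des w⁻¹ := by omega
    have e2 : y + n - j = y + n - 1 - des w := by omega
    rw [e1, e2]
  · have hz : twoSidedEulerianNum n i j = 0 := by
      rw [twoSidedEulerianNum, if_neg (by omega)]
    have hempty : (Finset.univ.filter fun w : Equiv.Perm (Fin n) =>
        (des w⁻¹ + 1, des w + 1) = (i, j)) = ∅ := by
      rw [Finset.filter_eq_empty_iff]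
      intro w _
      simp only [Prod.mk.injEq]
      omega
    rw [hz, hempty]
    simp

end Main

section Algebra

lemma A_zero_left (m j : ℕ) : twoSidedEulerianNum m 0 j = 0 := by
  rw [twoSidedEulerianNum, if_neg]; rintro ⟨h, -⟩; omega

lemma A_zero_right (m i : ℕ) : twoSidedEulerianNum m i 0 = 0 := by
  rw [twoSidedEulerianNum, if_neg]; rintro ⟨-, -, h, -⟩; omega

lemma A_gt_left (m i j : ℕ) (h : m < i) : twoSidedEulerianNum m i j = 0 := by
  rw [twoSidedEulerianNum, if_neg]; rintro ⟨-, h2, -⟩; omega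

lemma A_gt_right (m i j : ℕ) (h : m < j) : twoSidedEulerianNum m i j = 0 := by
  rw [twoSidedEulerianNum, if_neg]; rintro ⟨-, -, -, h2⟩; omega

lemma key_binom (x a i : ℕ) :
    (x : ℤ) * ((x + a).choose (i + a) : ℤ)
      = i * ((x + a + 1).choose (i + a + 1) : ℤ) + (a + 1) * ((x + a).choose (i + a + 1) : ℤ) := by
  have h1 := Nat.add_one_mul_choose_eq (x + a) (i + a)
  have h2 := Nat.choose_succ_succ (x + a) (i + a)
  have h1' : ((x : ℤ) + a + 1) * ((x + a).choose (i + a) : ℤ)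
      = ((x + a + 1).choose (i + a + 1) : ℤ) * ((i : ℤ) + a + 1) := by exact_mod_cast h1
  have h2' : ((x + a + 1).choose (i + a + 1) : ℤ)
      = ((x + a).choose (i + a) : ℤ) + ((x + a).choose (i + a + 1) : ℤ) := by exact_mod_cast h2
  linear_combination h1' + ((a : ℤ) + 1) * h2'

lemma pascal_cast (u m : ℕ) :
    ((u + 1).choose (m + 1) : ℤ) = (u.choose m : ℤ) + (u.choose (m + 1) : ℤ) := by
  exact_mod_cast Nat.choose_succ_succ u m

lemma bracket (x y n i j : ℕ) (hi : i + 1 ≤ n) (hj : j + 1 ≤ n) :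
    ((i : ℤ) * j + n - 1) * ((x + n - i).choose n : ℤ) * ((y + n - j).choose n : ℤ)
    + (1 - (n : ℤ) + j * ((n : ℤ) - i)) * ((x + n - (i + 1)).choose n : ℤ)
        * ((y + n - j).choose n : ℤ)
    + (1 - (n : ℤ) + i * ((n : ℤ) - j)) * ((x + n - i).choose n : ℤ)
        * ((y + n - (j + 1)).choose n : ℤ)
    + ((n : ℤ) - 1 + ((n : ℤ) - i) * ((n : ℤ) - j)) * ((x + n - (i + 1)).choose n : ℤ)
        * ((y + n - (j + 1)).choose n : ℤ)
    = ((x : ℤ) * y + n - 1) * ((x + (n - 1) - i).choose (n - 1) : ℤ)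
        * ((y + (n - 1) - j).choose (n - 1) : ℤ) := by
  obtain ⟨a, rfl⟩ : ∃ a, n = i + a + 1 := ⟨n - i - 1, by omega⟩
  obtain ⟨b, hb⟩ : ∃ b, i + a = j + b := ⟨i + a - j, by omega⟩
  have e1 : x + (i + a + 1) - i = x + a + 1 := by omega
  have e2 : x + (i + a + 1) - (i + 1) = x + a := by omega
  have e4 : (i + a + 1) - 1 = i + a := by omega
  have e3 : x + (i + a) - i = x + a := by omega
  have f1 : y + (i + a + 1) - j = y + b + 1 := by omega
  have f2 : y + (i + a + 1) - (j + 1) = y + b := by omega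
  have f3 : y + (i + a) - j = y + b := by omega
  rw [e1, e2, e4, e3, f1, f2, f3]
  have k1 := key_binom x a i
  have k2 := key_binom y b j
  rw [show j + b = i + a from hb.symm] at k2
  have p1 := pascal_cast (x + a) (i + a)
  have q1 := pascal_cast (y + b) (i + a)
  have hb' : (i : ℤ) + a = j + b := by exact_mod_cast hb
  have hx : (x : ℤ) * ((x + a).choose (i + a) : ℤ)
      = i * ((x + a).choose (i + a) : ℤ)
        + ((i : ℤ) + a + 1) * ((x + a).choose (i + a + 1) : ℤ) := by
    linear_combination k1 + (i : ℤ) * p1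
  have hy : (y : ℤ) * ((y + b).choose (i + a) : ℤ)
      = j * ((y + b).choose (i + a) : ℤ)
        + ((i : ℤ) + a + 1) * ((y + b).choose (i + a + 1) : ℤ) := by
    linear_combination k2 + (j : ℤ) * q1 - ((y + b).choose (i + a + 1) : ℤ) * hb'
  rw [p1, q1]
  push_cast
  linear_combination (-(y : ℤ) * ((y + b).choose (i + a) : ℤ)) * hx
    + (-((i : ℤ) * ((x + a).choose (i + a) : ℤ)
        + ((i : ℤ) + a + 1) * ((x + a).choose (i + a + 1) : ℤ))) * hy

end Algebra

section Final

/-- the difference of the two sides of the recurrence -/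
def cc (n i j : ℕ) : ℤ :=
  (n : ℤ) * twoSidedEulerianNum n i j -
    (((i : ℤ) * j + n - 1) * twoSidedEulerianNum (n-1) i j +
     (1 - (n : ℤ) + j * ((n : ℤ) + 1 - i)) * twoSidedEulerianNum (n-1) (i-1) j +
     (1 - (n : ℤ) + i * ((n : ℤ) + 1 - j)) * twoSidedEulerianNum (n-1) i (j-1) +
     ((n : ℤ) - 1 + ((n : ℤ) + 1 - i) * ((n : ℤ) + 1 - j)) * twoSidedEulerianNum (n-1) (i-1) (j-1))

lemma sumZero (n : ℕ) (hn : 2 ≤ n) (x y : ℕ) :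
    ∑ i ∈ Finset.range (n+1), ∑ j ∈ Finset.range (n+1),
      cc n i j * (((x + n - i).choose n : ℤ) * ((y + n - j).choose n : ℤ)) = 0 := by
  have part1 : ∑ i ∈ Finset.range (n+1), ∑ j ∈ Finset.range (n+1),
      (n : ℤ) * twoSidedEulerianNum n i j
        * (((x + n - i).choose n : ℤ) * ((y + n - j).choose n : ℤ))
      = (n : ℤ) * ((x*y + n - 1).choose n : ℤ) := by
    have h := CRS n x y (by omega)
    calc ∑ i ∈ Finset.range (n+1), ∑ j ∈ Finset.range (n+1),
          (n : ℤ) * twoSidedEulerianNum n i j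
            * (((x + n - i).choose n : ℤ) * ((y + n - j).choose n : ℤ))
        = (n : ℤ) * ∑ i ∈ Finset.range (n+1), ∑ j ∈ Finset.range (n+1),
            (twoSidedEulerianNum n i j : ℤ)
              * (((x + n - i).choose n : ℤ) * ((y + n - j).choose n : ℤ)) := by
          rw [Finset.mul_sum]
          exact Finset.sum_congr rfl fun i _ => by
            rw [Finset.mul_sum]
            exact Finset.sum_congr rfl fun j _ => by ring
      _ = (n : ℤ) * ((x*y + n - 1).choose n : ℤ) := by
          congr 1
          exact_mod_cast congrArg (Nat.cast : ℕ → ℤ) h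
  have hT1 : ∑ i ∈ Finset.range (n+1), ∑ j ∈ Finset.range (n+1),
      (((i : ℤ)*j + n - 1) * twoSidedEulerianNum (n-1) i j)
        * (((x + n - i).choose n : ℤ) * ((y + n - j).choose n : ℤ))
      = ∑ i ∈ Finset.range n, ∑ j ∈ Finset.range n,
      (((i : ℤ)*j + n - 1) * twoSidedEulerianNum (n-1) i j)
        * (((x + n - i).choose n : ℤ) * ((y + n - j).choose n : ℤ)) := by
    rw [Finset.sum_range_succ]
    rw [show (∑ j ∈ Finset.range (n+1),
      (((n : ℤ)*j + n - 1) * twoSidedEulerianNum (n-1) n j)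
        * (((x + n - n).choose n : ℤ) * ((y + n - j).choose n : ℤ))) = 0 from
      Finset.sum_eq_zero fun j _ => by rw [A_gt_left (n-1) n j (by omega)]; push_cast; ring]
    rw [add_zero]
    refine Finset.sum_congr rfl fun i _ => ?_
    rw [Finset.sum_range_succ, A_gt_right (n-1) i n (by omega)]
    push_cast
    ring
  have hT2 : ∑ i ∈ Finset.range (n+1), ∑ j ∈ Finset.range (n+1),
      ((1 - (n : ℤ) + j * ((n : ℤ) + 1 - i)) * twoSidedEulerianNum (n-1) (i-1) j)
        * (((x + n - i).choose n : ℤ) * ((y + n - j).choose n : ℤ))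
      = ∑ i ∈ Finset.range n, ∑ j ∈ Finset.range n,
      ((1 - (n : ℤ) + j * ((n : ℤ) - i)) * twoSidedEulerianNum (n-1) i j)
        * (((x + n - (i+1)).choose n : ℤ) * ((y + n - j).choose n : ℤ)) := by
    rw [Finset.sum_range_succ']
    have h0 : (∑ j ∈ Finset.range (n+1),
        ((1 - (n : ℤ) + j * ((n : ℤ) + 1 - ((0:ℕ) : ℤ))) * twoSidedEulerianNum (n-1) (0-1) j)
          * (((x + n - 0).choose n : ℤ) * ((y + n - j).choose n : ℤ))) = 0 :=
      Finset.sum_eq_zero fun j _ => by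
        rw [show (0:ℕ) - 1 = 0 by omega, A_zero_left]; push_cast; ring
    rw [h0, add_zero]
    refine Finset.sum_congr rfl fun i _ => ?_
    rw [Finset.sum_range_succ, show (i+1) - 1 = i by omega, A_gt_right (n-1) i n (by omega)]
    simp only [Nat.cast_zero, mul_zero, zero_mul, add_zero]
    refine Finset.sum_congr rfl fun j _ => ?_
    push_cast
    ring
  have hT3 : ∑ i ∈ Finset.range (n+1), ∑ j ∈ Finset.range (n+1),
      ((1 - (n : ℤ) + i * ((n : ℤ) + 1 - j)) * twoSidedEulerianNum (n-1) i (j-1))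
        * (((x + n - i).choose n : ℤ) * ((y + n - j).choose n : ℤ))
      = ∑ i ∈ Finset.range n, ∑ j ∈ Finset.range n,
      ((1 - (n : ℤ) + i * ((n : ℤ) - j)) * twoSidedEulerianNum (n-1) i j)
        * (((x + n - i).choose n : ℤ) * ((y + n - (j+1)).choose n : ℤ)) := by
    rw [Finset.sum_range_succ]
    have h0 : (∑ j ∈ Finset.range (n+1),
        ((1 - (n : ℤ) + n * ((n : ℤ) + 1 - j)) * twoSidedEulerianNum (n-1) n (j-1))
          * (((x + n - n).choose n : ℤ) * ((y + n - j).choose n : ℤ))) = 0 :=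
      Finset.sum_eq_zero fun j _ => by
        rw [A_gt_left (n-1) n (j-1) (by omega)]; push_cast; ring
    rw [h0, add_zero]
    refine Finset.sum_congr rfl fun i _ => ?_
    rw [Finset.sum_range_succ']
    have h1 : ((1 - (n : ℤ) + i * ((n : ℤ) + 1 - ((0:ℕ) : ℤ))) * twoSidedEulerianNum (n-1) i (0-1))
        * (((x + n - i).choose n : ℤ) * ((y + n - 0).choose n : ℤ)) = 0 := by
      rw [show (0:ℕ) - 1 = 0 by omega, A_zero_right]; push_cast; ring
    rw [h1, add_zero]
    refine Finset.sum_congr rfl fun j _ => ?_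
    rw [show (j+1) - 1 = j by omega]
    push_cast
    ring
  have hT4 : ∑ i ∈ Finset.range (n+1), ∑ j ∈ Finset.range (n+1),
      (((n : ℤ) - 1 + ((n : ℤ) + 1 - i) * ((n : ℤ) + 1 - j)) * twoSidedEulerianNum (n-1) (i-1) (j-1))
        * (((x + n - i).choose n : ℤ) * ((y + n - j).choose n : ℤ))
      = ∑ i ∈ Finset.range n, ∑ j ∈ Finset.range n,
      (((n : ℤ) - 1 + ((n : ℤ) - i) * ((n : ℤ) - j)) * twoSidedEulerianNum (n-1) i j)
        * (((x + n - (i+1)).choose n : ℤ) * ((y + n - (j+1)).choose n : ℤ)) := by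
    rw [Finset.sum_range_succ']
    have h0 : (∑ j ∈ Finset.range (n+1),
        (((n : ℤ) - 1 + ((n : ℤ) + 1 - ((0:ℕ) : ℤ)) * ((n : ℤ) + 1 - j))
            * twoSidedEulerianNum (n-1) (0-1) (j-1))
          * (((x + n - 0).choose n : ℤ) * ((y + n - j).choose n : ℤ))) = 0 :=
      Finset.sum_eq_zero fun j _ => by
        rw [show (0:ℕ) - 1 = 0 by omega, A_zero_left]; push_cast; ring
    rw [h0, add_zero]
    refine Finset.sum_congr rfl fun i _ => ?_
    rw [Finset.sum_range_succ']
    have h1 : (((n : ℤ) - 1 + ((n : ℤ) + 1 - ((i:ℕ)+1 : ℕ)) * ((n : ℤ) + 1 - ((0:ℕ) : ℤ)))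
          * twoSidedEulerianNum (n-1) ((i+1)-1) (0-1))
        * (((x + n - (i+1)).choose n : ℤ) * ((y + n - 0).choose n : ℤ)) = 0 := by
      rw [show (0:ℕ) - 1 = 0 by omega, A_zero_right]; push_cast; ring
    rw [h1, add_zero]
    refine Finset.sum_congr rfl fun j _ => ?_
    rw [show (i+1) - 1 = i by omega, show (j+1) - 1 = j by omega]
    push_cast
    ring
  have hcrs : (∑ i ∈ Finset.range n, ∑ j ∈ Finset.range n,
      (twoSidedEulerianNum (n-1) i j : ℤ)
        * (((x + (n-1) - i).choose (n-1) : ℤ) * ((y + (n-1) - j).choose (n-1) : ℤ)))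
      = ((x*y + (n-1) - 1).choose (n-1) : ℤ) := by
    have h := CRS (n-1) x y (by omega)
    rw [show n - 1 + 1 = n by omega] at h
    exact_mod_cast congrArg (Nat.cast : ℕ → ℤ) h
  have hfin : ((x:ℤ)*y + n - 1) * ((x*y + (n-1) - 1).choose (n-1) : ℤ)
      = (n:ℤ) * ((x*y + n - 1).choose n : ℤ) := by
    obtain ⟨m, rfl⟩ : ∃ m, n = m + 2 := ⟨n - 2, by omega⟩
    have hmul := Nat.add_one_mul_choose_eq (x*y + m) (m+1)
    have e1 : x*y + (m+2) - 1 = x*y + m + 1 := by omega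
    have e2 : x*y + ((m+2)-1) - 1 = x*y + m := by omega
    have e3 : (m+2) - 1 = m + 1 := by omega
    rw [e1, e2, e3]
    have hmz := congrArg (Nat.cast : ℕ → ℤ) hmul
    push_cast at hmz ⊢
    linear_combination hmz
  have hfour : (∑ i ∈ Finset.range (n+1), ∑ j ∈ Finset.range (n+1),
      (((i : ℤ)*j + n - 1) * twoSidedEulerianNum (n-1) i j)
        * (((x + n - i).choose n : ℤ) * ((y + n - j).choose n : ℤ)))
      + (∑ i ∈ Finset.range (n+1), ∑ j ∈ Finset.range (n+1),
      ((1 - (n : ℤ) + j * ((n : ℤ) + 1 - i)) * twoSidedEulerianNum (n-1) (i-1) j)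
        * (((x + n - i).choose n : ℤ) * ((y + n - j).choose n : ℤ)))
      + (∑ i ∈ Finset.range (n+1), ∑ j ∈ Finset.range (n+1),
      ((1 - (n : ℤ) + i * ((n : ℤ) + 1 - j)) * twoSidedEulerianNum (n-1) i (j-1))
        * (((x + n - i).choose n : ℤ) * ((y + n - j).choose n : ℤ)))
      + (∑ i ∈ Finset.range (n+1), ∑ j ∈ Finset.range (n+1),
      (((n : ℤ) - 1 + ((n : ℤ) + 1 - i) * ((n : ℤ) + 1 - j)) * twoSidedEulerianNum (n-1) (i-1) (j-1))
        * (((x + n - i).choose n : ℤ) * ((y + n - j).choose n : ℤ)))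
      = (n:ℤ) * ((x*y + n - 1).choose n : ℤ) := by
    rw [hT1, hT2, hT3, hT4]
    rw [← Finset.sum_add_distrib, ← Finset.sum_add_distrib, ← Finset.sum_add_distrib]
    have hstep : ∀ i ∈ Finset.range n, ∀ j ∈ Finset.range n,
        (((i : ℤ)*j + n - 1) * twoSidedEulerianNum (n-1) i j)
          * (((x + n - i).choose n : ℤ) * ((y + n - j).choose n : ℤ))
        + ((1 - (n : ℤ) + j * ((n : ℤ) - i)) * twoSidedEulerianNum (n-1) i j)
          * (((x + n - (i+1)).choose n : ℤ) * ((y + n - j).choose n : ℤ))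
        + ((1 - (n : ℤ) + i * ((n : ℤ) - j)) * twoSidedEulerianNum (n-1) i j)
          * (((x + n - i).choose n : ℤ) * ((y + n - (j+1)).choose n : ℤ))
        + (((n : ℤ) - 1 + ((n : ℤ) - i) * ((n : ℤ) - j)) * twoSidedEulerianNum (n-1) i j)
          * (((x + n - (i+1)).choose n : ℤ) * ((y + n - (j+1)).choose n : ℤ))
        = (twoSidedEulerianNum (n-1) i j : ℤ)
          * (((x:ℤ)*y + n - 1) * (((x + (n-1) - i).choose (n-1) : ℤ)
              * ((y + (n-1) - j).choose (n-1) : ℤ))) := by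
      intro i hi j hj
      rw [Finset.mem_range] at hi hj
      have hbr := bracket x y n i j (by omega) (by omega)
      linear_combination (twoSidedEulerianNum (n-1) i j : ℤ) * hbr
    calc ∑ i ∈ Finset.range n, (∑ j ∈ Finset.range n,
            (((i : ℤ)*j + n - 1) * twoSidedEulerianNum (n-1) i j)
              * (((x + n - i).choose n : ℤ) * ((y + n - j).choose n : ℤ))
          + ∑ j ∈ Finset.range n,
            ((1 - (n : ℤ) + j * ((n : ℤ) - i)) * twoSidedEulerianNum (n-1) i j)
              * (((x + n - (i+1)).choose n : ℤ) * ((y + n - j).choose n : ℤ))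
          + ∑ j ∈ Finset.range n,
            ((1 - (n : ℤ) + i * ((n : ℤ) - j)) * twoSidedEulerianNum (n-1) i j)
              * (((x + n - i).choose n : ℤ) * ((y + n - (j+1)).choose n : ℤ))
          + ∑ j ∈ Finset.range n,
            (((n : ℤ) - 1 + ((n : ℤ) - i) * ((n : ℤ) - j)) * twoSidedEulerianNum (n-1) i j)
              * (((x + n - (i+1)).choose n : ℤ) * ((y + n - (j+1)).choose n : ℤ)))
        = ∑ i ∈ Finset.range n, ∑ j ∈ Finset.range n,
            (twoSidedEulerianNum (n-1) i j : ℤ)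
              * (((x:ℤ)*y + n - 1) * (((x + (n-1) - i).choose (n-1) : ℤ)
                  * ((y + (n-1) - j).choose (n-1) : ℤ))) := by
          refine Finset.sum_congr rfl fun i hi => ?_
          rw [← Finset.sum_add_distrib, ← Finset.sum_add_distrib, ← Finset.sum_add_distrib]
          exact Finset.sum_congr rfl fun j hj => hstep i hi j hj
      _ = ((x:ℤ)*y + n - 1) * ∑ i ∈ Finset.range n, ∑ j ∈ Finset.range n,
            (twoSidedEulerianNum (n-1) i j : ℤ)
              * (((x + (n-1) - i).choose (n-1) : ℤ) * ((y + (n-1) - j).choose (n-1) : ℤ)) := by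
          rw [Finset.mul_sum]
          exact Finset.sum_congr rfl fun i _ => by
            rw [Finset.mul_sum]
            exact Finset.sum_congr rfl fun j _ => by ring
      _ = (n:ℤ) * ((x*y + n - 1).choose n : ℤ) := by rw [hcrs]; exact hfin
  have expand : ∀ i j : ℕ,
      cc n i j * (((x + n - i).choose n : ℤ) * ((y + n - j).choose n : ℤ))
      = (n : ℤ) * twoSidedEulerianNum n i j
          * (((x + n - i).choose n : ℤ) * ((y + n - j).choose n : ℤ))
        - ((((i : ℤ)*j + n - 1) * twoSidedEulerianNum (n-1) i j)
            * (((x + n - i).choose n : ℤ) * ((y + n - j).choose n : ℤ))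
          + ((1 - (n : ℤ) + j * ((n : ℤ) + 1 - i)) * twoSidedEulerianNum (n-1) (i-1) j)
            * (((x + n - i).choose n : ℤ) * ((y + n - j).choose n : ℤ))
          + ((1 - (n : ℤ) + i * ((n : ℤ) + 1 - j)) * twoSidedEulerianNum (n-1) i (j-1))
            * (((x + n - i).choose n : ℤ) * ((y + n - j).choose n : ℤ))
          + (((n : ℤ) - 1 + ((n : ℤ) + 1 - i) * ((n : ℤ) + 1 - j))
              * twoSidedEulerianNum (n-1) (i-1) (j-1))
            * (((x + n - i).choose n : ℤ) * ((y + n - j).choose n : ℤ))) := by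
    intro i j
    unfold cc
    ring
  calc ∑ i ∈ Finset.range (n+1), ∑ j ∈ Finset.range (n+1),
        cc n i j * (((x + n - i).choose n : ℤ) * ((y + n - j).choose n : ℤ))
      = (∑ i ∈ Finset.range (n+1), ∑ j ∈ Finset.range (n+1),
          (n : ℤ) * twoSidedEulerianNum n i j
            * (((x + n - i).choose n : ℤ) * ((y + n - j).choose n : ℤ)))
        - ((∑ i ∈ Finset.range (n+1), ∑ j ∈ Finset.range (n+1),
          (((i : ℤ)*j + n - 1) * twoSidedEulerianNum (n-1) i j)
            * (((x + n - i).choose n : ℤ) * ((y + n - j).choose n : ℤ)))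
          + (∑ i ∈ Finset.range (n+1), ∑ j ∈ Finset.range (n+1),
          ((1 - (n : ℤ) + j * ((n : ℤ) + 1 - i)) * twoSidedEulerianNum (n-1) (i-1) j)
            * (((x + n - i).choose n : ℤ) * ((y + n - j).choose n : ℤ)))
          + (∑ i ∈ Finset.range (n+1), ∑ j ∈ Finset.range (n+1),
          ((1 - (n : ℤ) + i * ((n : ℤ) + 1 - j)) * twoSidedEulerianNum (n-1) i (j-1))
            * (((x + n - i).choose n : ℤ) * ((y + n - j).choose n : ℤ)))
          + (∑ i ∈ Finset.range (n+1), ∑ j ∈ Finset.range (n+1),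
          (((n : ℤ) - 1 + ((n : ℤ) + 1 - i) * ((n : ℤ) + 1 - j))
              * twoSidedEulerianNum (n-1) (i-1) (j-1))
            * (((x + n - i).choose n : ℤ) * ((y + n - j).choose n : ℤ)))) := by
        rw [← Finset.sum_add_distrib, ← Finset.sum_add_distrib, ← Finset.sum_add_distrib,
          ← Finset.sum_sub_distrib]
        refine Finset.sum_congr rfl fun i _ => ?_
        rw [← Finset.sum_add_distrib, ← Finset.sum_add_distrib, ← Finset.sum_add_distrib,
          ← Finset.sum_sub_distrib]
        exact Finset.sum_congr rfl fun j _ => expand i j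
    _ = 0 := by rw [part1, hfour, sub_self]

lemma extract (n : ℕ) (c : ℕ → ℕ → ℤ)
    (hz1 : ∀ j, c 0 j = 0) (hz2 : ∀ i, c i 0 = 0)
    (H : ∀ x y : ℕ, ∑ i ∈ Finset.range (n+1), ∑ j ∈ Finset.range (n+1),
      c i j * (((x + n - i).choose n : ℤ) * ((y + n - j).choose n : ℤ)) = 0) :
    ∀ i j : ℕ, i ≤ n → j ≤ n → c i j = 0 := by
  suffices hs : ∀ s : ℕ, ∀ i j : ℕ, i + j ≤ s → i ≤ n → j ≤ n → c i j = 0 by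
    exact fun i j hi hj => hs (i+j) i j le_rfl hi hj
  intro s
  induction s with
  | zero =>
    intro i j hs hi hj
    have : i = 0 := by omega
    subst this
    exact hz1 j
  | succ s ih =>
    intro i j hs hi hj
    rcases Nat.eq_zero_or_pos i with rfl | hipos
    · exact hz1 j
    rcases Nat.eq_zero_or_pos j with rfl | hjpos
    · exact hz2 i
    have H' := H i j
    have hinner : ∀ i' ∈ Finset.range (n+1), i' ≠ i →
        (∑ j' ∈ Finset.range (n+1),
          c i' j' * (((i + n - i').choose n : ℤ) * ((j + n - j').choose n : ℤ))) = 0 := by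
      intro i' hi' hne
      rw [Finset.mem_range] at hi'
      rcases Nat.lt_or_ge i i' with h | h
      · refine Finset.sum_eq_zero fun j' _ => ?_
        rw [Nat.choose_eq_zero_of_lt (show i + n - i' < n by omega)]
        push_cast; ring
      · refine Finset.sum_eq_zero fun j' hj' => ?_
        rw [Finset.mem_range] at hj'
        rcases Nat.lt_or_ge j j' with h2 | h2
        · rw [Nat.choose_eq_zero_of_lt (show j + n - j' < n by omega)]
          push_cast; ring
        · rw [ih i' j' (by omega) (by omega) (by omega)]
          ring
    rw [Finset.sum_eq_single_of_mem i (Finset.mem_range.2 (by omega)) hinner] at H'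
    have hj0 : ∀ j' ∈ Finset.range (n+1), j' ≠ j →
        c i j' * (((i + n - i).choose n : ℤ) * ((j + n - j').choose n : ℤ)) = 0 := by
      intro j' hj' hne
      rw [Finset.mem_range] at hj'
      rcases Nat.lt_or_ge j j' with h2 | h2
      · rw [Nat.choose_eq_zero_of_lt (show j + n - j' < n by omega)]
        push_cast; ring
      · rw [ih i j' (by omega) (by omega) (by omega)]
        ring
    rw [Finset.sum_eq_single_of_mem j (Finset.mem_range.2 (by omega)) hj0] at H'
    rw [show i + n - i = n by omega, show j + n - j = n by omega, Nat.choose_self] at H'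
    push_cast at H'
    linarith

end Final

end TSE

/-- The four-term recurrence for the two-sided Eulerian numbers:
`n A_{n,i,j} = (ij+n-1) A_{n-1,i,j} + (1-n+j(n+1-i)) A_{n-1,i-1,j}
  + (1-n+i(n+1-j)) A_{n-1,i,j-1} + (n-1+(n+1-i)(n+1-j)) A_{n-1,i-1,j-1}`. -/
theorem twoSidedEulerianNum_recurrence (n i j : ℕ) (hn : 2 ≤ n)
    (hi1 : 1 ≤ i) (hi2 : i ≤ n) (hj1 : 1 ≤ j) (hj2 : j ≤ n) :
    (n : ℤ) * twoSidedEulerianNum n i j =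
      ((i : ℤ) * j + n - 1) * twoSidedEulerianNum (n - 1) i j +
      (1 - (n : ℤ) + j * (n + 1 - i)) * twoSidedEulerianNum (n - 1) (i - 1) j +
      (1 - (n : ℤ) + i * (n + 1 - j)) * twoSidedEulerianNum (n - 1) i (j - 1) +
      ((n : ℤ) - 1 + (n + 1 - i) * (n + 1 - j)) *
        twoSidedEulerianNum (n - 1) (i - 1) (j - 1) := by
  have hz1 : ∀ j', TSE.cc n 0 j' = 0 := fun j' => by
    simp [TSE.cc, Nat.zero_sub, TSE.A_zero_left]
  have hz2 : ∀ i', TSE.cc n i' 0 = 0 := fun i' => by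
    simp [TSE.cc, Nat.zero_sub, TSE.A_zero_right]
  have h := TSE.extract n (TSE.cc n) hz1 hz2 (fun x y => TSE.sumZero n hn x y) i j hi2 hj2
  unfold TSE.cc at h
  linarith
end
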